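/- arXiv:2504.05493 — 3 statements merged into one kernel-verified Lean document; each statement's English description precedes it below -/
import Mathlib

section
/- Let E be a real normed vector space, let Φ : E → E be Lipschitz with constant L_Φ ≥ 0, let N : E → E be Lipschitz with constant L_N ≥ 0, let h > 0, p ∈ ℕ, ε > 0, and set α = L_Φ + h^(p+1)·L_N and β = ε·h^(p+1). Let (x_k)_{k≥0} be a sequence in E (the exact solution samples) satisfying ‖x_{k+1} − Φ(x_k) − h^(p+1)·N(x_k)‖ ≤ β for all k ≥ 0, and define the enhanced-integrator sequence (y_k) by y_0 = x_0 and y_{k+1} = Φ(y_k) + h^(p+1)·N(y_k). Let e_k = y_k − x_k. Then for every k ≥ 0: if α > 1 then ‖e_{k+1}‖ ≤ β·(exp((k+1)·(α−1)) − 1)/(α−1); if α = 1 then ‖e_{k+1}‖ ≤ (k+1)·β; and if 0 < α < 1 then ‖e_{k+1}‖ ≤ β/(1−α). -/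
/-- Global error bound for a neural-network-enhanced one-step integrator:
the three regimes α > 1, α = 1 and 0 < α < 1. -/
theorem enhanced_integrator_global_error_bound
    {E : Type*} [NormedAddCommGroup E] [NormedSpace ℝ E]
    (Φ N : E → E) (LΦ LN : ℝ) (hLΦ : 0 ≤ LΦ) (hLN : 0 ≤ LN)
    (hΦ : ∀ a b : E, ‖Φ a - Φ b‖ ≤ LΦ * ‖a - b‖)
    (hN : ∀ a b : E, ‖N a - N b‖ ≤ LN * ‖a - b‖)
    (h : ℝ) (hh : 0 < h) (p : ℕ) (ε : ℝ) (hε : 0 < ε)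
    (α β : ℝ) (hα : α = LΦ + h ^ (p + 1) * LN) (hβ : β = ε * h ^ (p + 1))
    (x : ℕ → E)
    (hx : ∀ k : ℕ, ‖x (k + 1) - Φ (x k) - h ^ (p + 1) • N (x k)‖ ≤ β)
    (y : ℕ → E) (hy0 : y 0 = x 0)
    (hy : ∀ k : ℕ, y (k + 1) = Φ (y k) + h ^ (p + 1) • N (y k))
    (e : ℕ → E) (he : ∀ k : ℕ, e k = y k - x k) :
    ∀ k : ℕ,
      (1 < α → ‖e (k + 1)‖ ≤ β * (Real.exp ((k + 1 : ℝ) * (α - 1)) - 1) / (α - 1)) ∧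
      (α = 1 → ‖e (k + 1)‖ ≤ (k + 1 : ℝ) * β) ∧
      (0 < α → α < 1 → ‖e (k + 1)‖ ≤ β / (1 - α)) := by
  have hpow : (0:ℝ) < h ^ (p + 1) := pow_pos hh _
  have hβpos : 0 < β := by rw [hβ]; positivity
  have hαnn : 0 ≤ α := by
    rw [hα]; positivity
  -- one-step recurrence
  have step : ∀ k : ℕ, ‖e (k + 1)‖ ≤ α * ‖e k‖ + β := by
    intro k
    have hid : e (k + 1) =
        (Φ (y k) - Φ (x k)) + h ^ (p + 1) • (N (y k) - N (x k))
          - (x (k + 1) - Φ (x k) - h ^ (p + 1) • N (x k)) := by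
      rw [he, hy, smul_sub]; abel
    calc ‖e (k + 1)‖
        ≤ ‖(Φ (y k) - Φ (x k)) + h ^ (p + 1) • (N (y k) - N (x k))‖
          + ‖x (k + 1) - Φ (x k) - h ^ (p + 1) • N (x k)‖ := by
          rw [hid]; exact norm_sub_le _ _
      _ ≤ (‖Φ (y k) - Φ (x k)‖ + ‖h ^ (p + 1) • (N (y k) - N (x k))‖) + β := by
          gcongr
          · exact norm_add_le _ _
          · exact hx k
      _ ≤ (LΦ * ‖y k - x k‖ + h ^ (p + 1) * (LN * ‖y k - x k‖)) + β := by
          gcongr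
          · exact hΦ _ _
          · rw [norm_smul, Real.norm_eq_abs, abs_of_pos hpow]
            gcongr
            exact hN _ _
      _ = α * ‖e k‖ + β := by rw [hα, he]; ring
  -- geometric-sum bound
  have key : ∀ k : ℕ, ‖e k‖ ≤ β * ∑ i ∈ Finset.range k, α ^ i := by
    intro k
    induction k with
    | zero => simp [he, hy0]
    | succ k ih =>
      calc ‖e (k + 1)‖ ≤ α * ‖e k‖ + β := step k
        _ ≤ α * (β * ∑ i ∈ Finset.range k, α ^ i) + β := by gcongr
        _ = β * ∑ i ∈ Finset.range (k + 1), α ^ i := by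
            rw [geom_sum_succ]; ring
  intro k
  refine ⟨fun h1 => ?_, fun h1 => ?_, fun h0 h1 => ?_⟩
  · have hne : α ≠ 1 := ne_of_gt h1
    have hsum : ∑ i ∈ Finset.range (k + 1), α ^ i = (α ^ (k + 1) - 1) / (α - 1) :=
      geom_sum_eq hne _
    have hbase : α ≤ Real.exp (α - 1) := by
      have := Real.add_one_le_exp (α - 1); linarith
    have hpow2 : α ^ (k + 1) ≤ Real.exp ((k + 1 : ℝ) * (α - 1)) := by
      calc α ^ (k + 1) ≤ Real.exp (α - 1) ^ (k + 1) := by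
            exact pow_le_pow_left₀ hαnn hbase _
        _ = Real.exp ((k + 1 : ℝ) * (α - 1)) := by
            rw [← Real.exp_nat_mul]; norm_num
    calc ‖e (k + 1)‖ ≤ β * ((α ^ (k + 1) - 1) / (α - 1)) := by
          rw [← hsum]; exact key (k + 1)
      _ ≤ β * (Real.exp ((k + 1 : ℝ) * (α - 1)) - 1) / (α - 1) := by
          rw [mul_div_assoc]
          have h2 : 0 < α - 1 := by linarith
          gcongr <;> linarith
  · calc ‖e (k + 1)‖ ≤ β * ∑ i ∈ Finset.range (k + 1), α ^ i := key (k + 1)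
      _ = (k + 1 : ℝ) * β := by subst h1; simp [mul_comm]
  · have hne : α ≠ 1 := ne_of_lt h1
    have hsum : ∑ i ∈ Finset.range (k + 1), α ^ i = (α ^ (k + 1) - 1) / (α - 1) :=
      geom_sum_eq hne _
    have hpnn : (0:ℝ) ≤ α ^ (k + 1) := pow_nonneg hαnn _
    calc ‖e (k + 1)‖ ≤ β * ((α ^ (k + 1) - 1) / (α - 1)) := by
          rw [← hsum]; exact key (k + 1)
      _ = β * ((1 - α ^ (k + 1)) / (1 - α)) := by
          congr 1
          rw [div_eq_div_iff (by linarith) (by linarith)]; ring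
      _ ≤ β * (1 / (1 - α)) := by
          gcongr
          · linarith
      _ = β / (1 - α) := by ring
end

section
/- Let E be a real Banach space, let f : E → E be twice continuously differentiable (ContDiff ℝ 2), let x : ℝ → E satisfy the autonomous ordinary differential equation x'(t) = f(x(t)) for all t (i.e., HasDerivAt x (f (x t)) t for every t ∈ ℝ), and let t₀ ∈ ℝ. Then the local error of one step of Heun's method (the explicit trapezoidal rule) is of order three in the step size: the function h ↦ x(t₀ + h) − x(t₀) − (h/2) • ( f(x(t₀)) + f( x(t₀) + h • f(x(t₀)) ) ) is O(h³) as h → 0 (big-O with respect to the filter of neighborhoods of 0 in ℝ). -/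
open Asymptotics

/-- If `g 0 = 0`, `g` has derivative `g'` everywhere and `g' = O(h^k)` near `0`,
then `g = O(h^(k+1))` near `0`. -/
lemma aux_step_isBigO {E : Type*} [NormedAddCommGroup E] [NormedSpace ℝ E]
    {g g' : ℝ → E} {k : ℕ} (h0 : g 0 = 0)
    (hd : ∀ t : ℝ, HasDerivAt g (g' t) t)
    (hO : g' =O[nhds (0 : ℝ)] fun h : ℝ => h ^ k) :
    g =O[nhds (0 : ℝ)] fun h : ℝ => h ^ (k + 1) := by
  obtain ⟨C, hC0, hC⟩ := hO.exists_nonneg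
  rw [IsBigOWith, Metric.eventually_nhds_iff] at hC
  obtain ⟨ε, εpos, hε⟩ := hC
  refine IsBigO.of_bound C ?_
  rw [Metric.eventually_nhds_iff]
  refine ⟨ε, εpos, fun h hh => ?_⟩
  have habs : |h| < ε := by simpa [Real.dist_eq] using hh
  have hseg : ∀ t ∈ Set.uIcc (0 : ℝ) h, ‖g' t‖ ≤ C * |h| ^ k := by
    intro t ht
    rw [Set.uIcc_eq_union] at ht
    have htabs : |t| ≤ |h| := by
      rcases ht with ht | ht <;> rw [Set.mem_Icc] at ht <;> rw [abs_le] <;>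
        cases abs_cases h with
        | inl hc => constructor <;> nlinarith [ht.1, ht.2, hc.1, hc.2]
        | inr hc => constructor <;> nlinarith [ht.1, ht.2, hc.1, hc.2]
    have h1 : ‖g' t‖ ≤ C * ‖t ^ k‖ :=
      hε (by simpa [Real.dist_eq] using lt_of_le_of_lt htabs habs)
    calc ‖g' t‖ ≤ C * ‖t ^ k‖ := h1
      _ = C * |t| ^ k := by rw [Real.norm_eq_abs, abs_pow]
      _ ≤ C * |h| ^ k := by gcongr
  have key := Convex.norm_image_sub_le_of_norm_hasDerivWithin_le
    (f := g) (f' := g') (s := Set.uIcc (0 : ℝ) h) (C := C * |h| ^ k)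
    (fun t ht => (hd t).hasDerivWithinAt) hseg (convex_uIcc 0 h)
    Set.left_mem_uIcc Set.right_mem_uIcc
  rw [h0, sub_zero, sub_zero] at key
  calc ‖g h‖ ≤ C * |h| ^ k * ‖h‖ := key
    _ = C * ‖h ^ (k + 1)‖ := by
        rw [Real.norm_eq_abs, Real.norm_eq_abs, abs_pow, pow_succ, mul_assoc]

set_option maxHeartbeats 1000000 in
/-- The local error of one step of Heun's method (explicit trapezoidal rule)
applied to the autonomous ODE `x' = f(x)` with `f` twice continuously
differentiable is of order three in the step size. -/
theorem heun_local_error_isBigO_cube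
    {E : Type*} [NormedAddCommGroup E] [NormedSpace ℝ E] [CompleteSpace E]
    (f : E → E) (hf : ContDiff ℝ 2 f)
    (x : ℝ → E) (hx : ∀ t : ℝ, HasDerivAt x (f (x t)) t) (t₀ : ℝ) :
    (fun h : ℝ =>
        x (t₀ + h) - x t₀ - (h / 2) • (f (x t₀) + f (x t₀ + h • f (x t₀))))
      =O[nhds (0 : ℝ)] fun h : ℝ => h ^ 3 := by
  have hf1 : Differentiable ℝ f := hf.differentiable (by norm_num)
  have hfd : ContDiff ℝ 1 (fderiv ℝ f) := hf.fderiv_right (by norm_num)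
  set x₀ : E := x t₀ with hx₀def
  set v : E := f x₀ with hvdef
  -- the solution curve shifted to start at 0
  set u : ℝ → E := fun h => x (t₀ + h) with hudef
  have hu' : ∀ h : ℝ, HasDerivAt u (f (u h)) h := by
    intro h
    have h1 : HasDerivAt (fun s : ℝ => t₀ + s) 1 h := (hasDerivAt_id h).const_add t₀
    have h2 := (hx (t₀ + h)).scomp h h1
    simpa [hudef, Function.comp_def] using h2
  -- the straight line `h ↦ x₀ + h • v`
  have hline : ∀ h : ℝ, HasDerivAt (fun s : ℝ => x₀ + s • v) v h := by
    intro h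
    simpa using ((hasDerivAt_id h).smul_const v).const_add x₀
  -- the auxiliary maps
  set φ : ℝ → E := fun h => f (x₀ + h • v) with hφdef
  set D : ℝ → E := fun h => fderiv ℝ f (x₀ + h • v) v with hDdef
  set ψ : E → E := fun y => fderiv ℝ f y v with hψdef
  have hψ : ContDiff ℝ 1 ψ := (ContinuousLinearMap.apply ℝ E v).contDiff.comp hfd
  set D' : ℝ → E := fun h => fderiv ℝ ψ (x₀ + h • v) v with hD'def
  set A : ℝ → E := fun h => fderiv ℝ f (u h) (f (u h)) with hAdef
  have hφ' : ∀ h : ℝ, HasDerivAt φ (D h) h := fun h =>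
    (hf1.differentiableAt.hasFDerivAt).comp_hasDerivAt h (hline h)
  have hD' : ∀ h : ℝ, HasDerivAt D (D' h) h := fun h =>
    ((hψ.differentiable (by norm_num)).differentiableAt.hasFDerivAt).comp_hasDerivAt h (hline h)
  have hA' : ∀ h : ℝ, HasDerivAt (fun s : ℝ => f (u s)) (A h) h := fun h =>
    (hf1.differentiableAt.hasFDerivAt).comp_hasDerivAt h (hu' h)
  -- g, g', g''
  set g : ℝ → E := fun h => x (t₀ + h) - x₀ - (h / 2) • (v + f (x₀ + h • v)) with hgdef
  set g' : ℝ → E := fun h =>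
      f (u h) - ((h / 2) • D h + (2 : ℝ)⁻¹ • (v + φ h)) with hg'def
  set g'' : ℝ → E := fun h =>
      A h - (((h / 2) • D' h + (2 : ℝ)⁻¹ • D h) + (2 : ℝ)⁻¹ • D h) with hg''def
  have hg0 : g 0 = 0 := by simp [hgdef, hx₀def]
  have hgd : ∀ h : ℝ, HasDerivAt g (g' h) h := by
    intro h
    have hc : HasDerivAt (fun s : ℝ => s / 2) (2 : ℝ)⁻¹ h := by
      simpa using (hasDerivAt_id h).div_const 2
    have hw : HasDerivAt (fun s : ℝ => (s / 2) • (v + φ s))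
        ((h / 2) • D h + (2 : ℝ)⁻¹ • (v + φ h)) h :=
      hc.smul ((hφ' h).const_add v)
    exact ((hu' h).sub_const x₀).sub hw
  have hg'0 : g' 0 = 0 := by
    have hu0 : u 0 = x₀ := by simp [hudef, hx₀def]
    have hφ0 : φ 0 = v := by simp [hφdef, ← hvdef]
    rw [hg'def]
    simp only [hu0, hφ0, zero_div, zero_smul, zero_add, ← hvdef]
    module
  have hg'd : ∀ h : ℝ, HasDerivAt g' (g'' h) h := by
    intro h
    have hc : HasDerivAt (fun s : ℝ => s / 2) (2 : ℝ)⁻¹ h := by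
      simpa using (hasDerivAt_id h).div_const 2
    have h1 : HasDerivAt (fun s : ℝ => (2 : ℝ)⁻¹ • (v + φ s)) ((2 : ℝ)⁻¹ • D h) h :=
      ((hφ' h).const_add v).const_smul _
    have h2 : HasDerivAt (fun s : ℝ => (s / 2) • D s)
        ((h / 2) • D' h + (2 : ℝ)⁻¹ • D h) h := hc.smul (hD' h)
    exact (hA' h).sub (h2.add h1)
  -- `g'' = O(h)` near `0`
  have hA0D0 : A 0 = D 0 := by
    simp [hAdef, hDdef, hudef, ← hx₀def, ← hvdef]
  have hAdiff : DifferentiableAt ℝ A 0 := by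
    have hu0 : u 0 = x₀ := by simp [hudef, hx₀def]
    have hχ : DifferentiableAt ℝ (fun y : E => fderiv ℝ f y (f y)) (u 0) := by
      rw [hu0]
      have hb : DifferentiableAt ℝ
          (fun p : (E →L[ℝ] E) × E => p.1 p.2) (fderiv ℝ f x₀, f x₀) :=
        isBoundedBilinearMap_apply.differentiable.differentiableAt
      exact hb.comp x₀ (DifferentiableAt.prodMk ((hfd.differentiable one_ne_zero) x₀) hf1.differentiableAt)
    exact hχ.comp 0 (hu' 0).differentiableAt
  have hAO : (fun h : ℝ => A h - A 0) =O[nhds (0 : ℝ)] fun h : ℝ => h := by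
    simpa using hAdiff.isBigO_sub
  have hDO : (fun h : ℝ => D h - D 0) =O[nhds (0 : ℝ)] fun h : ℝ => h := by
    simpa using (hD' 0).differentiableAt.isBigO_sub
  have hD'cont : ContinuousAt D' 0 := by
    have : Continuous D' := by
      apply (ContinuousLinearMap.apply ℝ E v).continuous.comp
      exact (hψ.continuous_fderiv one_ne_zero).comp (by continuity)
    exact this.continuousAt
  have hD'O : (fun h : ℝ => (h / 2) • D' h) =O[nhds (0 : ℝ)] fun h : ℝ => h := by
    refine IsBigO.of_bound (‖D' 0‖ + 1) ?_
    have hev : ∀ᶠ h : ℝ in nhds 0, ‖D' h‖ < ‖D' 0‖ + 1 :=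
      (hD'cont.norm).eventually_lt_const (by linarith)
    filter_upwards [hev] with h hh
    rw [norm_smul, Real.norm_eq_abs, Real.norm_eq_abs, abs_div, abs_two]
    nlinarith [abs_nonneg h, norm_nonneg (D' h),
      mul_le_mul_of_nonneg_left hh.le (abs_nonneg h)]
  have hg''O : g'' =O[nhds (0 : ℝ)] fun h : ℝ => h := by
    have hfe : g'' = fun h : ℝ => ((A h - A 0) - (D h - D 0)) - (h / 2) • D' h := by
      funext h
      rw [hg''def, hA0D0]
      module
    rw [hfe]
    exact (hAO.sub hDO).sub hD'O
  have hg'O : g' =O[nhds (0 : ℝ)] fun h : ℝ => h ^ 2 :=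
    aux_step_isBigO hg'0 hg'd (by simpa using hg''O)
  have hgO : g =O[nhds (0 : ℝ)] fun h : ℝ => h ^ 3 :=
    aux_step_isBigO hg0 hgd hg'O
  exact hgO
end

section
/- Let E be a real Banach space, let f : E → E be three times continuously differentiable (ContDiff ℝ 3), let x : ℝ → E satisfy the autonomous ordinary differential equation x'(t) = f(x(t)) for all t (i.e., HasDerivAt x (f (x t)) t for every t ∈ ℝ), and let t₀ ∈ ℝ. Define, for step size h, the stages k₁ = f(x(t₀)), k₂ = f(x(t₀) + h • k₁), k₃ = f(x(t₀) + (h/4) • (k₁ + k₂)). Then the local error of one step of the three-stage Runge–Kutta scheme with update x(t₀) + h • ((1/6) k₁ + (1/6) k₂ + (2/3) k₃) is of order four in the step size: the function h ↦ x(t₀ + h) − x(t₀) − h • ((1/6) k₁ + (1/6) k₂ + (2/3) k₃) is O(h⁴) as h → 0 (big-O with respect to the filter of neighborhoods of 0 in ℝ). -/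
open Asymptotics

private lemma stepL {E : Type*} [NormedAddCommGroup E] [NormedSpace ℝ E]
    {g g' : ℝ → E} (hd : ∀ t : ℝ, HasDerivAt g (g' t) t) (h0 : g 0 = 0)
    {n : ℕ} (hO : g' =O[nhds (0:ℝ)] fun h => h ^ n) :
    g =O[nhds (0:ℝ)] fun h : ℝ => h ^ (n + 1) := by
  obtain ⟨C, hC, hCb⟩ := hO.exists_nonneg
  rw [isBigOWith_iff] at hCb
  rw [Metric.eventually_nhds_iff] at hCb
  obtain ⟨ε, hε, hball⟩ := hCb
  rw [isBigO_iff]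
  refine ⟨C, ?_⟩
  rw [Metric.eventually_nhds_iff]
  refine ⟨ε, hε, fun h hh => ?_⟩
  have hd' : ∀ t ∈ Set.uIcc (0:ℝ) h, HasDerivWithinAt g (g' t) (Set.uIcc (0:ℝ) h) t :=
    fun t _ => (hd t).hasDerivWithinAt
  have habs : ∀ t ∈ Set.uIcc (0:ℝ) h, |t| ≤ |h| := by
    intro t ht
    rw [Set.uIcc_eq_union] at ht
    rcases ht with ht | ht <;> rw [Set.mem_Icc] at ht <;>
      cases' abs_cases h with hc hc <;> cases' abs_cases t with hct hct <;> linarith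
  have hbound : ∀ t ∈ Set.uIcc (0:ℝ) h, ‖g' t‖ ≤ C * |h| ^ n := by
    intro t ht
    have h1 : ‖g' t‖ ≤ C * ‖t ^ n‖ := by
      apply hball
      simp only [Real.dist_eq, sub_zero]
      exact lt_of_le_of_lt (habs t ht) (by simpa [Real.dist_eq] using hh)
    refine h1.trans ?_
    have : ‖t ^ n‖ ≤ |h| ^ n := by
      simp only [norm_pow, Real.norm_eq_abs]
      exact pow_le_pow_left₀ (abs_nonneg t) (habs t ht) n
    exact mul_le_mul_of_nonneg_left this hC
  have key := Convex.norm_image_sub_le_of_norm_hasDerivWithin_le hd' hbound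
    (convex_uIcc 0 h) (Set.left_mem_uIcc) (Set.right_mem_uIcc)
  rw [h0, sub_zero, sub_zero] at key
  calc ‖g h‖ ≤ C * |h| ^ n * ‖h‖ := key
    _ = C * ‖h ^ (n+1)‖ := by
        simp [norm_pow, Real.norm_eq_abs, pow_succ]; ring

section RKaux
variable {E : Type*} [NormedAddCommGroup E] [NormedSpace ℝ E]

/-- second stage argument -/
private noncomputable def rkA2 (f : E → E) (x₀ : E) (h : ℝ) : E := x₀ + h • f x₀
private noncomputable def rkK (f : E → E) (x₀ : E) (h : ℝ) : E := fderiv ℝ f (rkA2 f x₀ h) (f x₀)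
private noncomputable def rkS (f : E → E) (x₀ : E) (h : ℝ) : E := f x₀ + f (rkA2 f x₀ h)
private noncomputable def rkA3 (f : E → E) (x₀ : E) (h : ℝ) : E := x₀ + (h / 4) • rkS f x₀ h
private noncomputable def rkQ (f : E → E) (x₀ : E) (h : ℝ) : E :=
  (1 / 4 : ℝ) • rkS f x₀ h + (h / 4) • rkK f x₀ h
private noncomputable def rkK' (f : E → E) (x₀ : E) (h : ℝ) : E :=
  fderiv ℝ (fderiv ℝ f) (rkA2 f x₀ h) (f x₀) (f x₀)
private noncomputable def rkQ' (f : E → E) (x₀ : E) (h : ℝ) : E :=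
  (1 / 4 : ℝ) • rkK f x₀ h + ((1 / 4 : ℝ) • rkK f x₀ h + (h / 4) • rkK' f x₀ h)
private noncomputable def rkPhi0 (f : E → E) (x₀ : E) (h : ℝ) : E :=
  (1 / 6 : ℝ) • f x₀ + (1 / 6 : ℝ) • f (rkA2 f x₀ h) + (2 / 3 : ℝ) • f (rkA3 f x₀ h)
private noncomputable def rkPhi1 (f : E → E) (x₀ : E) (h : ℝ) : E :=
  (1 / 6 : ℝ) • rkK f x₀ h + (2 / 3 : ℝ) • (fderiv ℝ f (rkA3 f x₀ h) (rkQ f x₀ h))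
private noncomputable def rkPhi2 (f : E → E) (x₀ : E) (h : ℝ) : E :=
  (1 / 6 : ℝ) • rkK' f x₀ h +
  (2 / 3 : ℝ) • (fderiv ℝ (fderiv ℝ f) (rkA3 f x₀ h) (rkQ f x₀ h) (rkQ f x₀ h)
      + fderiv ℝ f (rkA3 f x₀ h) (rkQ' f x₀ h))

variable {f : E → E} {x₀ : E}

private lemma hfd (hf : ContDiff ℝ 3 f) (y : E) : HasFDerivAt f (fderiv ℝ f y) y :=
  (hf.differentiable (by norm_num) y).hasFDerivAt

private lemma hD1 (hf : ContDiff ℝ 3 f) : ContDiff ℝ 2 (fderiv ℝ f) :=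
  hf.fderiv_right (by norm_num)

private lemma hD1d (hf : ContDiff ℝ 3 f) (y : E) :
    HasFDerivAt (fderiv ℝ f) (fderiv ℝ (fderiv ℝ f) y) y :=
  ((hD1 hf).differentiable (by norm_num) y).hasFDerivAt

private lemma hD2 (hf : ContDiff ℝ 3 f) : ContDiff ℝ 1 (fderiv ℝ (fderiv ℝ f)) :=
  (hD1 hf).fderiv_right (by norm_num)

private lemma hD2d (hf : ContDiff ℝ 3 f) : Differentiable ℝ (fderiv ℝ (fderiv ℝ f)) :=
  (hD2 hf).differentiable (by norm_num)

private lemma dA2 (h : ℝ) : HasDerivAt (rkA2 f x₀) (f x₀) h := by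
  have := (hasDerivAt_const h x₀).add ((hasDerivAt_id h).smul_const (f x₀))
  simp only [zero_add, one_smul] at this
  exact this

private lemma dK2 (hf : ContDiff ℝ 3 f) (h : ℝ) :
    HasDerivAt (fun h => f (rkA2 f x₀ h)) (rkK f x₀ h) h :=
  (hfd hf (rkA2 f x₀ h)).comp_hasDerivAt h (dA2 h)

private lemma dK (hf : ContDiff ℝ 3 f) (h : ℝ) :
    HasDerivAt (rkK f x₀) (rkK' f x₀ h) h := by
  have hc : HasDerivAt (fun h => fderiv ℝ f (rkA2 f x₀ h))
      (fderiv ℝ (fderiv ℝ f) (rkA2 f x₀ h) (f x₀)) h :=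
    (hD1d hf (rkA2 f x₀ h)).comp_hasDerivAt h (dA2 h)
  have := hc.clm_apply (hasDerivAt_const h (f x₀))
  simp only [map_zero, add_zero] at this
  exact this

private lemma dS (hf : ContDiff ℝ 3 f) (h : ℝ) :
    HasDerivAt (rkS f x₀) (rkK f x₀ h) h := by
  have := (hasDerivAt_const h (f x₀)).add (dK2 (x₀ := x₀) hf h)
  simp only [zero_add] at this
  exact this

private lemma dA3 (hf : ContDiff ℝ 3 f) (h : ℝ) :
    HasDerivAt (rkA3 f x₀) (rkQ f x₀ h) h := by
  have h4 : HasDerivAt (fun h : ℝ => h / 4) (1 / 4 : ℝ) h := by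
    simpa using (hasDerivAt_id h).div_const 4
  unfold rkA3 rkQ
  convert (hasDerivAt_const h x₀).add (h4.smul (dS (x₀ := x₀) hf h)) using 1
  · rfl
  module

private lemma dQ (hf : ContDiff ℝ 3 f) (h : ℝ) :
    HasDerivAt (rkQ f x₀) (rkQ' f x₀ h) h := by
  have h4 : HasDerivAt (fun h : ℝ => h / 4) (1 / 4 : ℝ) h := by
    simpa using (hasDerivAt_id h).div_const 4
  unfold rkQ rkQ'
  convert ((dS (x₀ := x₀) hf h).const_smul (1 / 4 : ℝ)).add (h4.smul (dK (x₀ := x₀) hf h)) using 1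
  · rfl
  module

private lemma dK3 (hf : ContDiff ℝ 3 f) (h : ℝ) :
    HasDerivAt (fun h => f (rkA3 f x₀ h)) (fderiv ℝ f (rkA3 f x₀ h) (rkQ f x₀ h)) h :=
  (hfd hf (rkA3 f x₀ h)).comp_hasDerivAt h (dA3 hf h)

private lemma dK3' (hf : ContDiff ℝ 3 f) (h : ℝ) :
    HasDerivAt (fun h => fderiv ℝ f (rkA3 f x₀ h) (rkQ f x₀ h))
      (fderiv ℝ (fderiv ℝ f) (rkA3 f x₀ h) (rkQ f x₀ h) (rkQ f x₀ h)
        + fderiv ℝ f (rkA3 f x₀ h) (rkQ' f x₀ h)) h := by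
  have hc : HasDerivAt (fun h => fderiv ℝ f (rkA3 f x₀ h))
      (fderiv ℝ (fderiv ℝ f) (rkA3 f x₀ h) (rkQ f x₀ h)) h :=
    (hD1d hf (rkA3 f x₀ h)).comp_hasDerivAt h (dA3 hf h)
  exact hc.clm_apply (dQ hf h)

private lemma dPhi0 (hf : ContDiff ℝ 3 f) (h : ℝ) :
    HasDerivAt (rkPhi0 f x₀) (rkPhi1 f x₀ h) h := by
  unfold rkPhi0 rkPhi1
  convert ((hasDerivAt_const h ((1/6:ℝ) • f x₀)).add
      ((dK2 (x₀ := x₀) hf h).const_smul (1/6:ℝ))).add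
      ((dK3 (x₀ := x₀) hf h).const_smul (2/3:ℝ)) using 1
  · rfl
  module

private lemma dPhi1 (hf : ContDiff ℝ 3 f) (h : ℝ) :
    HasDerivAt (rkPhi1 f x₀) (rkPhi2 f x₀ h) h := by
  unfold rkPhi1 rkPhi2
  exact ((dK (x₀ := x₀) hf h).const_smul (1/6:ℝ)).add
      ((dK3' (x₀ := x₀) hf h).const_smul (2/3:ℝ))

private noncomputable def rkW (f : E → E) (X : ℝ → E) (h : ℝ) : E :=
  fderiv ℝ f (X h) (f (X h))
private noncomputable def rkW1 (f : E → E) (X : ℝ → E) (h : ℝ) : E :=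
  fderiv ℝ (fderiv ℝ f) (X h) (f (X h)) (f (X h)) + fderiv ℝ f (X h) (rkW f X h)
private noncomputable def rkG1 (f : E → E) (X : ℝ → E) (h : ℝ) : E :=
  f (X h) - rkPhi0 f (X 0) h - h • rkPhi1 f (X 0) h
private noncomputable def rkG2 (f : E → E) (X : ℝ → E) (h : ℝ) : E :=
  rkW f X h - (2 : ℝ) • rkPhi1 f (X 0) h - h • rkPhi2 f (X 0) h
private noncomputable def rkU (f : E → E) (X : ℝ → E) (h : ℝ) : E :=
  rkW f X h - (2 : ℝ) • rkPhi1 f (X 0) h - h • rkPhi2 f (X 0) 0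
private noncomputable def rkU' (f : E → E) (X : ℝ → E) (h : ℝ) : E :=
  rkW1 f X h - (2 : ℝ) • rkPhi2 f (X 0) h - rkPhi2 f (X 0) 0

variable {X : ℝ → E}

private lemma dF (hf : ContDiff ℝ 3 f) (hX : ∀ h, HasDerivAt X (f (X h)) h) (h : ℝ) :
    HasDerivAt (fun h => f (X h)) (rkW f X h) h :=
  (hfd hf (X h)).comp_hasDerivAt h (hX h)

private lemma dW (hf : ContDiff ℝ 3 f) (hX : ∀ h, HasDerivAt X (f (X h)) h) (h : ℝ) :
    HasDerivAt (rkW f X) (rkW1 f X h) h := by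
  have hc : HasDerivAt (fun h => fderiv ℝ f (X h))
      (fderiv ℝ (fderiv ℝ f) (X h) (f (X h))) h :=
    (hD1d hf (X h)).comp_hasDerivAt h (hX h)
  unfold rkW rkW1
  exact hc.clm_apply (dF hf hX h)

private lemma dG (hf : ContDiff ℝ 3 f) (hX : ∀ h, HasDerivAt X (f (X h)) h) (h : ℝ) :
    HasDerivAt (fun h => X h - X 0 - h • rkPhi0 f (X 0) h) (rkG1 f X h) h := by
  unfold rkG1
  convert ((hX h).sub_const (X 0)).sub
    ((hasDerivAt_id' (x := h)).smul (dPhi0 (x₀ := X 0) hf h)) using 1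
  · rfl
  module

private lemma dG1 (hf : ContDiff ℝ 3 f) (hX : ∀ h, HasDerivAt X (f (X h)) h) (h : ℝ) :
    HasDerivAt (rkG1 f X) (rkG2 f X h) h := by
  unfold rkG1 rkG2
  convert ((dF hf hX h).sub (dPhi0 (x₀ := X 0) hf h)).sub
    ((hasDerivAt_id' (x := h)).smul (dPhi1 (x₀ := X 0) hf h)) using 1
  · rfl
  module

private lemma dU (hf : ContDiff ℝ 3 f) (hX : ∀ h, HasDerivAt X (f (X h)) h) (h : ℝ) :
    HasDerivAt (rkU f X) (rkU' f X h) h := by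
  unfold rkU rkU'
  convert ((dW hf hX h).sub ((dPhi1 (x₀ := X 0) hf h).const_smul (2 : ℝ))).sub
    ((hasDerivAt_id' (x := h)).smul_const (rkPhi2 f (X 0) 0)) using 1
  · rfl
  module

private lemma diffA2 : Differentiable ℝ (rkA2 f x₀) := by
  unfold rkA2; exact (differentiable_id.smul_const (f x₀)).const_add x₀

private lemma diffK (hf : ContDiff ℝ 3 f) : Differentiable ℝ (rkK f x₀) := by
  unfold rkK
  exact (((hD1 hf).differentiable (by norm_num)).comp diffA2).clm_apply
    (differentiable_const _)

private lemma diffS (hf : ContDiff ℝ 3 f) : Differentiable ℝ (rkS f x₀) := by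
  unfold rkS
  exact ((hf.differentiable (by norm_num)).comp diffA2).const_add _

private lemma diffA3 (hf : ContDiff ℝ 3 f) : Differentiable ℝ (rkA3 f x₀) := by
  unfold rkA3
  exact ((differentiable_id.div_const 4).smul (diffS hf)).const_add x₀

private lemma diffQ (hf : ContDiff ℝ 3 f) : Differentiable ℝ (rkQ f x₀) := by
  unfold rkQ
  exact ((diffS hf).const_smul _).add ((differentiable_id.div_const 4).smul (diffK hf))

private lemma diffK' (hf : ContDiff ℝ 3 f) : Differentiable ℝ (rkK' f x₀) := by
  unfold rkK'
  exact (((hD2d hf).comp diffA2).clm_apply (differentiable_const _)).clm_apply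
    (differentiable_const _)

private lemma diffQ' (hf : ContDiff ℝ 3 f) : Differentiable ℝ (rkQ' f x₀) := by
  unfold rkQ'
  exact ((diffK hf).const_smul _).add (((diffK hf).const_smul _).add
    ((differentiable_id.div_const 4).smul (diffK' hf)))

private lemma diffPhi2 (hf : ContDiff ℝ 3 f) : Differentiable ℝ (rkPhi2 f x₀) := by
  unfold rkPhi2
  refine ((diffK' hf).const_smul _).add (Differentiable.const_smul ?_ _)
  refine Differentiable.add ?_ ?_
  · exact ((((hD2d hf).comp (diffA3 hf)).clm_apply (diffQ hf)).clm_apply (diffQ hf))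
  · exact (((hD1 hf).differentiable (by norm_num)).comp (diffA3 hf)).clm_apply (diffQ' hf)

private lemma diffU' (hf : ContDiff ℝ 3 f) (hX : ∀ h, HasDerivAt X (f (X h)) h) :
    Differentiable ℝ (rkU' f X) := by
  have df : Differentiable ℝ f := hf.differentiable (by norm_num)
  have dD1 : Differentiable ℝ (fderiv ℝ f) := (hD1 hf).differentiable (by norm_num)
  have dD2 : Differentiable ℝ (fderiv ℝ (fderiv ℝ f)) := hD2d hf
  have dX : Differentiable ℝ X := fun h => (hX h).differentiableAt
  have dXF : Differentiable ℝ (fun h => f (X h)) := df.comp dX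
  have dW' : Differentiable ℝ (rkW f X) := by
    unfold rkW; exact ((dD1.comp dX).clm_apply dXF)
  have dW1 : Differentiable ℝ (rkW1 f X) := by
    unfold rkW1
    exact (((dD2.comp dX).clm_apply dXF).clm_apply dXF).add ((dD1.comp dX).clm_apply dW')
  unfold rkU'
  exact (dW1.sub ((diffPhi2 hf).const_smul _)).sub_const _

private lemma g1z : rkG1 f X 0 = 0 := by
  simp [rkG1, rkPhi0, rkA2, rkA3, rkS]
  module

private lemma uz (hf : ContDiff ℝ 3 f) : rkU f X 0 = 0 := by
  simp [rkU, rkW, rkPhi1, rkK, rkQ, rkS, rkA2, rkA3, map_add, map_smul]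
  module

private lemma u'z (hf : ContDiff ℝ 3 f) : rkU' f X 0 = 0 := by
  simp [rkU', rkW1, rkW, rkPhi2, rkK', rkQ', rkQ, rkK, rkS, rkA2, rkA3,
    map_add, map_smul, ContinuousLinearMap.add_apply, ContinuousLinearMap.smul_apply]
  module

private theorem rk_aux (f : E → E) (hf : ContDiff ℝ 3 f)
    (X : ℝ → E) (hX : ∀ h, HasDerivAt X (f (X h)) h) :
    (fun h : ℝ => X h - X 0 - h • rkPhi0 f (X 0) h) =O[nhds (0 : ℝ)]
      fun h : ℝ => h ^ 4 := by
  have hu'O : rkU' f X =O[nhds (0:ℝ)] fun h => h ^ 1 := by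
    have h1 := ((diffU' hf hX) 0).hasFDerivAt.isBigO_sub
    simpa [u'z hf] using h1
  have hU : rkU f X =O[nhds (0:ℝ)] fun h : ℝ => h ^ 2 :=
    stepL (dU hf hX) (uz hf) hu'O
  have hsub : (fun h => rkPhi2 f (X 0) h - rkPhi2 f (X 0) 0) =O[nhds (0:ℝ)]
      fun h : ℝ => h := by
    simpa using ((diffPhi2 hf (x₀ := X 0)) 0).hasFDerivAt.isBigO_sub
  have hsm : (fun h : ℝ => h • (rkPhi2 f (X 0) h - rkPhi2 f (X 0) 0)) =O[nhds (0:ℝ)]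
      fun h : ℝ => h ^ 2 := by
    have := (isBigO_refl (fun h : ℝ => h) (nhds (0:ℝ))).smul hsub
    simpa [pow_two, smul_eq_mul] using this
  have hG2 : rkG2 f X =O[nhds (0:ℝ)] fun h : ℝ => h ^ 2 := by
    have heq : rkG2 f X = fun h => rkU f X h - h • (rkPhi2 f (X 0) h - rkPhi2 f (X 0) 0) := by
      funext h; unfold rkG2 rkU; module
    rw [heq]; exact hU.sub hsm
  have hG1 : rkG1 f X =O[nhds (0:ℝ)] fun h : ℝ => h ^ 3 :=
    stepL (dG1 hf hX) g1z hG2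
  exact stepL (dG hf hX) (by simp) hG1

end RKaux


/-- The local error of one step of the three-stage third-order explicit
Runge–Kutta scheme `k₁ = f(x), k₂ = f(x + h k₁), k₃ = f(x + (h/4)(k₁+k₂))`,
`Φ(x) = x + h (k₁/6 + k₂/6 + 2 k₃/3)`, applied to the autonomous ODE
`x' = f(x)` with `f` three times continuously differentiable, is of order
four in the step size. -/
theorem rk3_local_error_isBigO_fourth
    {E : Type*} [NormedAddCommGroup E] [NormedSpace ℝ E] [CompleteSpace E]
    (f : E → E) (hf : ContDiff ℝ 3 f)
    (x : ℝ → E) (hx : ∀ t : ℝ, HasDerivAt x (f (x t)) t) (t₀ : ℝ) :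
    (fun h : ℝ =>
        x (t₀ + h) - x t₀ -
          h • ((1 / 6 : ℝ) • f (x t₀) +
               (1 / 6 : ℝ) • f (x t₀ + h • f (x t₀)) +
               (2 / 3 : ℝ) • f (x t₀ +
                 (h / 4) • (f (x t₀) + f (x t₀ + h • f (x t₀))))))
      =O[nhds (0 : ℝ)] fun h : ℝ => h ^ 4 := by
  have hX : ∀ h : ℝ, HasDerivAt (fun h : ℝ => x (t₀ + h)) (f (x (t₀ + h))) h := by
    intro h
    have := (hx (t₀ + h)).scomp h ((hasDerivAt_id h).const_add t₀)
    simp only [Function.comp_def, one_smul] at this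
    exact this
  have H := rk_aux f hf (fun h : ℝ => x (t₀ + h)) hX
  simp only [rkPhi0, rkA2, rkA3, rkS, add_zero] at H
  exact H
end
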